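/- Let λ, μ, c > 0 with μ/λ < c, and let x : [0,∞) → ℝ be differentiable with x'(t) = λ x(t)² − (λc + μ) x(t) + μc for all t ≥ 0. If x(0) ∈ (μ/λ, c), then x'(t) < 0 for all t ≥ 0, x is strictly decreasing, and x(t) → μ/λ as t → ∞; in particular the equilibrium x₂* = c is unstable: every solution starting in (μ/λ, c), however close to c, eventually leaves the interval (c − (c − μ/λ)/2, c]. -/

import Mathlib

open Set Filter

/-- Backward uniqueness at an equilibrium `e` for `x' = lam (x - e') (x - e)`:
if `x s = e` then `x 0 = e`. -/
lemma no_touch (lam e e' : ℝ) (x : ℝ → ℝ) (s : ℝ) (hs : 0 ≤ s)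
    (hx : ∀ t ∈ Icc (0 : ℝ) s, HasDerivAt x (lam * (x t - e') * (x t - e)) t)
    (hxs : x s = e) : x 0 = e := by
  set y : ℝ → ℝ := fun u => x (s - u) - e with hy
  have hmem : ∀ t ∈ Icc (0 : ℝ) s, s - t ∈ Icc (0 : ℝ) s := by
    intro t ht; exact ⟨by linarith [ht.2], by linarith [ht.1]⟩
  have hxdiff : ∀ t ∈ Icc (0 : ℝ) s, HasDerivAt y
      ((-(lam * (x (s - t) - e'))) * y t) t := by
    intro t ht
    have h1 : HasDerivAt (fun u : ℝ => s - u) (-1 : ℝ) t := by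
      simpa using (hasDerivAt_id t).const_sub s
    have h2 := (hx _ (hmem t ht)).comp t h1
    have h3 : HasDerivAt y ((lam * (x (s - t) - e') * (x (s - t) - e)) * (-1)) t := by
      simpa [hy, Function.comp] using h2.sub_const e
    convert h3 using 1
    simp only [hy]; ring
  have hxcont : ContinuousOn x (Icc (0 : ℝ) s) := fun t ht =>
    (hx t ht).continuousAt.continuousWithinAt
  have hcomp : ContinuousOn (fun t => x (s - t)) (Icc (0 : ℝ) s) :=
    hxcont.comp (continuousOn_const.sub continuousOn_id) hmem
  obtain ⟨C, hC⟩ := (isCompact_Icc (a := (0:ℝ)) (b := s)).exists_bound_of_continuousOn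
    (f := fun t => -(lam * (x (s - t) - e')))
    (((continuousOn_const.mul (hcomp.sub continuousOn_const))).neg)
  set K : ℝ := max C 0 with hK
  have hcontY : ContinuousOn y (Icc 0 s) := (hcomp.sub continuousOn_const)
  have := norm_le_gronwallBound_of_norm_deriv_right_le (a := 0) (b := s)
    (f := y) (f' := fun t => (-(lam * (x (s - t) - e'))) * y t)
    (δ := 0) (K := K) (ε := 0) hcontY
    (fun t ht => (hxdiff t (Ico_subset_Icc_self ht)).hasDerivWithinAt)
    (by simp [hy, hxs])
    (by
      intro t ht
      have hb := hC t (Ico_subset_Icc_self ht)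
      rw [norm_mul]
      have h1 : ‖-(lam * (x (s - t) - e'))‖ ≤ K := le_trans hb (le_max_left _ _)
      have h2 : (0:ℝ) ≤ ‖y t‖ := norm_nonneg _
      nlinarith [norm_nonneg (-(lam * (x (s - t) - e')))])
  have hys := this s ⟨hs, le_refl s⟩
  rw [gronwallBound_ε0] at hys
  simp only [zero_mul] at hys
  have : y s = 0 := by
    have := norm_nonneg (y s); have := abs_nonneg (y s)
    simpa [Real.norm_eq_abs, abs_nonpos_iff] using hys
  simpa [hy, sub_eq_zero] using this

theorem stmt_4 (lam mu c : ℝ) (hlam : 0 < lam) (hmu : 0 < mu) (hc : 0 < c)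
    (hcase : mu / lam < c)
    (x : ℝ → ℝ)
    (hx : ∀ t ≥ (0 : ℝ),
      HasDerivAt x (lam * x t ^ 2 - (lam * c + mu) * x t + mu * c) t)
    (hx0 : x 0 ∈ Ioo (mu / lam) c) :
    (∀ t ≥ (0 : ℝ), lam * x t ^ 2 - (lam * c + mu) * x t + mu * c < 0) ∧
    StrictAntiOn x (Ici (0 : ℝ)) ∧
    Tendsto x atTop (nhds (mu / lam)) ∧
    (∃ t ≥ (0 : ℝ), x t ∉ Ioc (c - (c - mu / lam) / 2) c) := by
  set m : ℝ := mu / lam with hm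
  have hmc : m < c := hcase
  have hlam' : lam ≠ 0 := ne_of_gt hlam
  have hfactor : ∀ u : ℝ, lam * u ^ 2 - (lam * c + mu) * u + mu * c
      = lam * (u - m) * (u - c) := by
    intro u
    have hlm : lam * m = mu := by rw [hm]; field_simp
    linear_combination (u - c) * hlm
  have hfactor' : ∀ u : ℝ, lam * u ^ 2 - (lam * c + mu) * u + mu * c
      = lam * (u - c) * (u - m) := by
    intro u; rw [hfactor]; ring
  -- invariance
  have hxcont : ∀ s : ℝ, ContinuousOn x (Icc 0 s) := by
    intro s t ht; exact (hx t ht.1).continuousAt.continuousWithinAt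
  have hinv : ∀ t ≥ (0 : ℝ), x t ∈ Ioo m c := by
    intro t ht
    by_contra hcon
    rw [mem_Ioo, not_and_or, not_lt, not_lt] at hcon
    rcases hcon with h | h
    · -- x t ≤ m : x hits m at some s, contradiction
      have hmmem : m ∈ Icc (x t) (x 0) := ⟨h, hx0.1.le⟩
      obtain ⟨s, hsmem, hxs⟩ := intermediate_value_Icc' ht (hxcont t) hmmem
      have : x 0 = m := by
        apply no_touch lam m c x s hsmem.1
        · intro u hu
          rw [← hfactor']
          exact hx u (le_trans hu.1 (le_refl u) |>.trans (le_refl u)) |>.congr_deriv rfl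
        · exact hxs
      linarith [hx0.1]
    · -- x t ≥ c
      have hcmem : c ∈ Icc (x 0) (x t) := ⟨hx0.2.le, h⟩
      obtain ⟨s, hsmem, hxs⟩ := intermediate_value_Icc ht (hxcont t) hcmem
      have : x 0 = c := by
        apply no_touch lam c m x s hsmem.1
        · intro u hu
          rw [← hfactor]
          exact hx u hu.1
        · exact hxs
      linarith [hx0.2]
  -- part 1: derivative negative
  have hneg : ∀ t ≥ (0 : ℝ), lam * x t ^ 2 - (lam * c + mu) * x t + mu * c < 0 := by
    intro t ht
    have h := hinv t ht
    rw [hfactor]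
    have h1 : 0 < x t - m := by linarith [h.1]
    have h2 : 0 < c - x t := by linarith [h.2]
    nlinarith [mul_pos (mul_pos hlam h1) h2]
  -- part 2: strictly decreasing
  have hanti : StrictAntiOn x (Ici (0 : ℝ)) := by
    apply strictAntiOn_of_deriv_neg (convex_Ici 0)
    · intro t ht; exact (hx t ht).continuousAt.continuousWithinAt
    · intro t ht
      rw [interior_Ici] at ht
      rw [(hx t (le_of_lt ht)).deriv]
      exact hneg t (le_of_lt ht)
  -- part 3: convergence
  set x' : ℝ → ℝ := fun t => x (max t 0) with hx'
  have hx'anti : Antitone x' := by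
    intro t s h
    rcases eq_or_lt_of_le (max_le_max h (le_refl (0:ℝ))) with he | hl
    · simp [hx', he]
    · exact (hanti (le_max_right t 0) (le_max_right s 0) hl).le
  have hx'mem : ∀ t, x' t ∈ Ioo m c := fun t => hinv _ (le_max_right t 0)
  have hbdd : BddBelow (range x') := ⟨m, fun u ⟨t, ht⟩ => ht ▸ (hx'mem t).1.le⟩
  set L : ℝ := ⨅ t, x' t with hL
  have htendx' : Tendsto x' atTop (nhds L) := tendsto_atTop_ciInf hx'anti hbdd
  have hLm : m ≤ L := le_ciInf fun t => (hx'mem t).1.le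
  have hLle : L ≤ m := by
    by_contra hcon
    push_neg at hcon
    set δ : ℝ := lam * (L - m) * (c - x 0) with hδ
    have hδpos : 0 < δ := by
      have := hx0.2
      apply mul_pos (mul_pos hlam (by linarith)) (by linarith)
    have hLlex : ∀ t ≥ (0 : ℝ), L ≤ x t := by
      intro t ht
      have := ciInf_le hbdd t
      rwa [show x' t = x t by simp [hx', max_eq_left ht]] at this
    have hxlex0 : ∀ t ≥ (0 : ℝ), x t ≤ x 0 := by
      intro t ht
      rcases eq_or_lt_of_le ht with he | hl
      · rw [← he]
      · exact (hanti self_mem_Ici ht hl).le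
    -- h t = x t + δ t is antitone on Ici 0
    set g : ℝ → ℝ := fun t => x t + δ * t with hg
    have hganti : AntitoneOn g (Ici (0:ℝ)) := by
      apply antitoneOn_of_deriv_nonpos (convex_Ici 0)
      · intro t ht
        exact ((hx t ht).continuousAt.add (by fun_prop)).continuousWithinAt
      · intro t ht
        rw [interior_Ici] at ht
        exact (((hx t ht.le).differentiableAt).add
          ((differentiable_id.const_mul δ) t)).differentiableWithinAt
      · intro t ht
        rw [interior_Ici] at ht
        have hd : HasDerivAt g (lam * x t ^ 2 - (lam * c + mu) * x t + mu * c + δ) t := by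
          exact ((hx t ht.le).add ((hasDerivAt_id t).const_mul δ)).congr_deriv (by ring)
        rw [hd.deriv]
        have h1 := hLlex t ht.le
        have h2 := hxlex0 t ht.le
        have h3 := (hinv t ht.le).2
        rw [hfactor]
        have ha : L - m ≤ x t - m := by linarith
        have hb : c - x 0 ≤ c - x t := by linarith
        have key : (L - m) * (c - x 0) ≤ (x t - m) * (c - x t) :=
          mul_le_mul ha hb (by linarith [hx0.2]) (by linarith)
        have key2 := mul_le_mul_of_nonneg_left key hlam.le
        rw [hδ]
        nlinarith [key2]
    -- pick t large
    set T : ℝ := max 0 ((x 0 - m) / δ + 1) with hT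
    have hT0 : 0 ≤ T := le_max_left _ _
    have hT1 : (x 0 - m) / δ + 1 ≤ T := le_max_right _ _
    have := hganti (self_mem_Ici) (mem_Ici.mpr hT0) hT0
    have hgineq : x T + δ * T ≤ x 0 := by simpa [hg] using this
    have hxT : m < x T := (hinv T hT0).1
    have : δ * T ≥ x 0 - m + δ := by
      have := mul_le_mul_of_nonneg_left hT1 hδpos.le
      calc δ * T ≥ δ * ((x 0 - m) / δ + 1) := this
        _ = x 0 - m + δ := by field_simp
    linarith
  have hLeq : L = m := le_antisymm hLle hLm
  have htend : Tendsto x atTop (nhds m) := by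
    rw [← hLeq]
    apply htendx'.congr'
    filter_upwards [eventually_ge_atTop (0:ℝ)] with t ht
    simp [hx', max_eq_left ht]
  -- part 4
  refine ⟨hneg, hanti, htend, ?_⟩
  have hhalf : m < c - (c - m) / 2 := by linarith
  have hev : ∀ᶠ t in atTop, x t < c - (c - m) / 2 :=
    htend.eventually_lt_const hhalf
  obtain ⟨t, ht0, htlt⟩ := ((eventually_ge_atTop (0:ℝ)).and hev).exists
  exact ⟨t, ht0, fun hmem => absurd hmem.1 (not_lt.mpr htlt.le)⟩
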